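/- Let M be a ℤ-lattice in V with dual lattice M^∨, and let N ⊆ M be a primitive ℤ-submodule. Then the restriction map M^∨ → N^∨ = Hom_ℤ(N, ℤ), sending x to the homomorphism n ↦ b(x,n), induces an isomorphism of abelian groups M^∨/(N + N^⊥_{M^∨}) ≅ N^∨/N, where N^∨/N denotes the cokernel of the natural map N → N^∨. -/

import Mathlib

/-- Let `M` be a `ℤ`-lattice in `V` with dual lattice `M^∨`, and
`N ⊆ M` a primitive `ℤ`-submodule.  The restriction map `M^∨ → N^∨ = Hom_ℤ(N, ℤ)`,
`x ↦ (n ↦ b(x,n))`, induces an isomorphism of abelian groups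
`M^∨/(N + N^⊥_{M^∨}) ≅ N^∨/N`. -/
theorem stmt1
    {V : Type*} [AddCommGroup V] [Module ℚ V] [FiniteDimensional ℚ V]
    (b : LinearMap.BilinForm ℚ V)
    (hsymm : ∀ x y : V, b x y = b y x)
    (hnd : ∀ v : V, (∀ w : V, b v w = 0) → v = 0)
    -- M is a ℤ-lattice in V
    (M : Submodule ℤ V) (hMfg : M.FG)
    (hMspan : Submodule.span ℚ (M : Set V) = ⊤)
    (hMint : ∀ x ∈ M, ∀ y ∈ M, ∃ k : ℤ, b x y = (k : ℚ))
    -- the dual lattice M^∨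
    (Mdual : Submodule ℤ V)
    (hMdual : ∀ x : V, x ∈ Mdual ↔ ∀ m ∈ M, ∃ k : ℤ, b x m = (k : ℚ))
    (hMMdual : M ≤ Mdual)
    -- N ⊆ M primitive
    (N : Submodule ℤ V) (hNM : N ≤ M)
    (hprim : ∀ m ∈ M, ∀ k : ℤ, k ≠ 0 → k • m ∈ N → m ∈ N)
    -- N^⊥_{M^∨}, the orthogonal complement of N inside M^∨
    (NperpMdual : Submodule ℤ V)
    (hNperpMdual : ∀ x : V, x ∈ NperpMdual ↔ x ∈ Mdual ∧ ∀ n ∈ N, b x n = 0)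
    -- the natural map N → N^∨ = Hom_ℤ(N, ℤ), n ↦ (x ↦ b(x,n))
    (φ : N →ₗ[ℤ] (N →ₗ[ℤ] ℤ))
    (hφ : ∀ n x : N, ((φ n x : ℤ) : ℚ) = b (x : V) (n : V))
    -- the restriction map M^∨ → N^∨ = Hom_ℤ(N, ℤ), x ↦ (n ↦ b(x,n))
    (ρ : Mdual →ₗ[ℤ] (N →ₗ[ℤ] ℤ))
    (hρ : ∀ (x : Mdual) (n : N), ((ρ x n : ℤ) : ℚ) = b (x : V) (n : V)) :
    ∃ e : (Mdual ⧸ ((N ⊔ NperpMdual).comap Mdual.subtype)) ≃ₗ[ℤ]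
        ((N →ₗ[ℤ] ℤ) ⧸ LinearMap.range φ),
      ∀ x : Mdual, e (Submodule.Quotient.mk x) = Submodule.Quotient.mk (ρ x) := by
  classical
  have hMfin : Module.Finite ℤ M := Module.Finite.iff_fg.mpr hMfg
  -- Key step: the restriction map ρ is surjective
  have hsurj : ∀ f : N →ₗ[ℤ] ℤ, ∃ x : Mdual, ρ x = f := by
    intro f
    -- N as a submodule of M
    set N' : Submodule ℤ M := N.comap M.subtype with hN'def
    -- M ⧸ N' is torsion-free, hence free, hence projective
    have hNZSD : NoZeroSMulDivisors ℤ (M ⧸ N') := by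
      constructor
      intro c x hcx
      by_cases hc : c = 0
      · exact Or.inl hc
      · right
        obtain ⟨m, rfl⟩ := Submodule.Quotient.mk_surjective N' x
        rw [← Submodule.Quotient.mk_smul, Submodule.Quotient.mk_eq_zero] at hcx
        have hmem : c • (m : V) ∈ N := hcx
        have : (m : V) ∈ N := hprim (m : V) m.2 c hc hmem
        rw [Submodule.Quotient.mk_eq_zero]
        exact this
    obtain ⟨s, hs⟩ := N'.mkQ.exists_rightInverse_of_surjective (Submodule.range_mkQ N')
    have hπmem : ∀ m : M, m - s (N'.mkQ m) ∈ N' := by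
      intro m
      have h0 : N'.mkQ (m - s (N'.mkQ m)) = 0 := by
        have h1 := LinearMap.congr_fun hs (N'.mkQ m)
        simp only [LinearMap.comp_apply, LinearMap.id_apply] at h1
        rw [map_sub, h1, sub_self]
      rwa [Submodule.mkQ_apply, Submodule.Quotient.mk_eq_zero] at h0
    let π : M →ₗ[ℤ] N' := (LinearMap.id - s ∘ₗ N'.mkQ).codRestrict N'
      (fun m => by simpa using hπmem m)
    let j : N' →ₗ[ℤ] N := (M.subtype ∘ₗ N'.subtype).codRestrict N (fun x => x.2)
    let F : M →ₗ[ℤ] ℤ := f ∘ₗ j ∘ₗ π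
    have hFext : ∀ n : N, F ⟨(n : V), hNM n.2⟩ = f n := by
      intro n
      have hmem : (⟨(n : V), hNM n.2⟩ : M) ∈ N' := n.2
      have h0 : N'.mkQ (⟨(n : V), hNM n.2⟩ : M) = 0 := by
        rw [Submodule.mkQ_apply, Submodule.Quotient.mk_eq_zero]; exact hmem
      have hval : ((j (π ⟨(n : V), hNM n.2⟩) : N) : V) = (n : V) := by
        change ((((LinearMap.id - s ∘ₗ N'.mkQ : M →ₗ[ℤ] M)) ⟨(n : V), hNM n.2⟩ : M) : V) = (n : V)
        simp only [LinearMap.sub_apply, LinearMap.comp_apply, h0, map_zero, sub_zero,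
          LinearMap.id_apply]
      show f (j (π ⟨(n : V), hNM n.2⟩)) = f n
      congr 1
      exact Subtype.ext hval
    -- a ℤ-basis of M is a ℚ-basis of V
    have : Module.IsTorsionFree ℤ M := Module.IsTorsionFree.of_smul_eq_zero fun r m h => by
      by_contra hc
      push_neg at hc
      have h' : (r : ℚ) • ((m : M) : V) = 0 := by
        rw [Int.cast_smul_eq_zsmul]; exact congrArg Subtype.val h
      rcases smul_eq_zero.mp h' with h1 | h1
      · exact hc.1 (by exact_mod_cast h1)
      · exact hc.2 (Subtype.ext h1)
    haveI : Module.Free ℤ M := Module.free_of_finite_type_torsion_free'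
    let e := Module.Free.chooseBasis ℤ M
    set v : Module.Free.ChooseBasisIndex ℤ M → V := fun i => ((e i : M) : V) with hvdef
    have hliZ : LinearIndependent ℤ v :=
      e.linearIndependent.map' M.subtype (Submodule.ker_subtype M)
    have hliQ : LinearIndependent ℚ v := (LinearIndependent.iff_fractionRing ℤ ℚ).mp hliZ
    have hspanM : Submodule.span ℤ (Set.range v) = M := by
      have h1 : Submodule.map M.subtype (Submodule.span ℤ (Set.range (e : _ → M))) =
          Submodule.map M.subtype ⊤ := by rw [e.span_eq]
      rw [Submodule.map_span, Submodule.map_top, Submodule.range_subtype] at h1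
      have himg : Set.range v = ⇑M.subtype '' Set.range (e : _ → M) := by
        ext x; simp [v]
      rw [himg]
      exact h1
    have hspanQ : ⊤ ≤ Submodule.span ℚ (Set.range v) := by
      rw [← hMspan]
      apply Submodule.span_le.mpr
      intro x hx
      have hx' : x ∈ Submodule.span ℤ (Set.range v) := by rw [hspanM]; exact hx
      exact Submodule.span_subset_span ℤ ℚ _ hx'
    let vB : Module.Basis (Module.Free.ChooseBasisIndex ℤ M) ℚ V := Module.Basis.mk hliQ hspanQ
    let g : V →ₗ[ℚ] ℚ := vB.constr ℚ fun i => ((F (e i) : ℤ) : ℚ)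
    -- b is surjective onto the dual
    have hbinj : Function.Injective b := by
      intro x y hxy
      have hz : ∀ w, b (x - y) w = 0 := by
        intro w
        rw [LinearMap.BilinForm.sub_left, hxy, sub_self]
      have := hnd _ hz
      exact sub_eq_zero.mp this
    have hbsurj : Function.Surjective b :=
      (LinearMap.injective_iff_surjective_of_finrank_eq_finrank
        (Subspace.dual_finrank_eq (K := ℚ) (V := V)).symm).mp hbinj
    obtain ⟨x, hx⟩ := hbsurj g
    -- g agrees with F on M
    have key : ∀ m : M, g (m : V) = ((F m : ℤ) : ℚ) := by
      let l1 : M →ₗ[ℤ] ℚ := (g.restrictScalars ℤ) ∘ₗ M.subtype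
      let l2 : M →ₗ[ℤ] ℚ := (Algebra.linearMap ℤ ℚ) ∘ₗ F
      have hl : l1 = l2 := by
        apply e.ext
        intro i
        show g ((e i : M) : V) = ((F (e i) : ℤ) : ℚ)
        have : ((e i : M) : V) = vB i := by rw [Module.Basis.mk_apply]
        rw [this]
        exact vB.constr_basis ℚ _ i
      intro m
      exact LinearMap.congr_fun hl m
    have hxMdual : x ∈ Mdual := by
      rw [hMdual]
      intro m hm
      refine ⟨F ⟨m, hm⟩, ?_⟩
      have := LinearMap.congr_fun hx m
      rw [this]
      exact key ⟨m, hm⟩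
    refine ⟨⟨x, hxMdual⟩, ?_⟩
    ext n
    have hcast : ((ρ ⟨x, hxMdual⟩ n : ℤ) : ℚ) = ((f n : ℤ) : ℚ) := by
      rw [hρ]
      have h1 := LinearMap.congr_fun hx (n : V)
      rw [h1, key ⟨(n : V), hNM n.2⟩, hFext n]
    exact_mod_cast hcast
  -- the composed map ψ : Mdual → N^∨ ⧸ range φ
  set ψ : Mdual →ₗ[ℤ] ((N →ₗ[ℤ] ℤ) ⧸ LinearMap.range φ) :=
    (LinearMap.range φ).mkQ ∘ₗ ρ with hψdef
  have hψsurj : Function.Surjective ψ := by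
    intro y
    obtain ⟨f, rfl⟩ := Submodule.mkQ_surjective _ y
    obtain ⟨x, hxf⟩ := hsurj f
    exact ⟨x, by simp [ψ, hxf]⟩
  set K : Submodule ℤ Mdual := (N ⊔ NperpMdual).comap Mdual.subtype with hKdef
  have hker : ∀ x : Mdual, ψ x = 0 ↔ x ∈ K := by
    intro x
    constructor
    · intro h
      have hr : ρ x ∈ LinearMap.range φ := by
        rw [hψdef] at h
        simp only [LinearMap.comp_apply, Submodule.mkQ_apply,
          Submodule.Quotient.mk_eq_zero] at h
        exact h
      obtain ⟨n, hn⟩ := hr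
      have hxn : (x : V) - (n : V) ∈ NperpMdual := by
        rw [hNperpMdual]
        refine ⟨Mdual.sub_mem x.2 (hMMdual (hNM n.2)), ?_⟩
        intro n' hn'
        have h1 : ((ρ x ⟨n', hn'⟩ : ℤ) : ℚ) = b (x : V) n' := hρ x ⟨n', hn'⟩
        have h2 : ((φ n ⟨n', hn'⟩ : ℤ) : ℚ) = b n' (n : V) := hφ n ⟨n', hn'⟩
        have h3 : φ n ⟨n', hn'⟩ = ρ x ⟨n', hn'⟩ := by rw [hn]
        rw [LinearMap.BilinForm.sub_left, ← h1, ← h3, hsymm (n : V) n', ← h2]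
        push_cast
        ring
      have hmem : (x : V) ∈ N ⊔ NperpMdual := by
        refine Submodule.mem_sup.mpr ⟨(n : V), n.2, (x : V) - (n : V), hxn, ?_⟩
        abel
      exact hmem
    · intro h
      obtain ⟨y, hy, z, hz, hyz⟩ := Submodule.mem_sup.mp h
      have hrx : ρ x = φ ⟨y, hy⟩ := by
        ext n'
        have h1 := hρ x n'
        have h2 := hφ ⟨y, hy⟩ n'
        have hz' := ((hNperpMdual z).mp hz).2 (n' : V) n'.2
        have hyz' : y + z = (x : V) := hyz
        have hcast : ((ρ x n' : ℤ) : ℚ) = ((φ ⟨y, hy⟩ n' : ℤ) : ℚ) := by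
          rw [h1, h2]
          show b (x : V) (n' : V) = b (n' : V) y
          rw [← hyz', LinearMap.BilinForm.add_left, hz', hsymm y (n' : V)]
          ring
        exact_mod_cast hcast
      rw [hψdef]
      simp only [LinearMap.comp_apply, Submodule.mkQ_apply, Submodule.Quotient.mk_eq_zero]
      exact ⟨⟨y, hy⟩, hrx.symm⟩
  have hKker : K = LinearMap.ker ψ := by
    ext x
    rw [LinearMap.mem_ker]
    exact (hker x).symm
  refine ⟨LinearEquiv.ofBijective (K.liftQ ψ hKker.le) ⟨?_, ?_⟩, ?_⟩
  · rw [← LinearMap.ker_eq_bot]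
    exact Submodule.ker_liftQ_eq_bot _ _ _ hKker.ge
  · intro y
    obtain ⟨x, hxy⟩ := hψsurj y
    exact ⟨Submodule.Quotient.mk x, by rwa [Submodule.liftQ_apply]⟩
  · intro x
    simp only [LinearEquiv.ofBijective_apply, Submodule.liftQ_apply, hψdef,
      LinearMap.comp_apply, Submodule.mkQ_apply]
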